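/- Let σ > 0, k > 1, and let Φ_k(r) = r^k. Define for x, y ∈ ℝ² and t ∈ ℝ, S_t = diag(σ^t, σ^{−t}), and g(t) = Φ_k(|S_t x − S_t y|) for fixed x ≠ y. Then g is twice differentiable and g''(t) ≥ 0 for all t, i.e., t ↦ |S_t x − S_t y|^k is convex. -/

import Mathlib

theorem power_of_deformed_distance_convex (σ k : ℝ) (hσ : 0 < σ) (hk : 1 < k)
    (x y : ℝ × ℝ) (hxy : x ≠ y) :
    ContDiff ℝ 2 (fun t : ℝ =>
        (Real.sqrt ((σ ^ t * (x.1 - y.1)) ^ 2 + (σ ^ (-t) * (x.2 - y.2)) ^ 2)) ^ k) ∧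
    ∀ t : ℝ, 0 ≤ iteratedDeriv 2 (fun t : ℝ =>
        (Real.sqrt ((σ ^ t * (x.1 - y.1)) ^ 2 + (σ ^ (-t) * (x.2 - y.2)) ^ 2)) ^ k) t := by
  set a := x.1 - y.1 with ha_def
  set b := x.2 - y.2 with hb_def
  have hab : a ≠ 0 ∨ b ≠ 0 := by
    by_contra h
    push_neg at h
    exact hxy (Prod.ext (sub_eq_zero.mp h.1) (sub_eq_zero.mp h.2))
  set L := Real.log σ with hL_def
  set u : ℝ → ℝ := fun t => a ^ 2 * Real.exp (2 * L * t) + b ^ 2 * Real.exp (-(2 * L * t))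
    with hu_def
  have hu : ∀ t, 0 < u t := by
    intro t
    rcases hab with h | h
    · have h1 : 0 < a ^ 2 * Real.exp (2 * L * t) := by positivity
      have h2 : 0 ≤ b ^ 2 * Real.exp (-(2 * L * t)) := by positivity
      simpa [hu_def] using add_pos_of_pos_of_nonneg h1 h2
    · have h1 : 0 ≤ a ^ 2 * Real.exp (2 * L * t) := by positivity
      have h2 : 0 < b ^ 2 * Real.exp (-(2 * L * t)) := by positivity
      simpa [hu_def] using add_pos_of_nonneg_of_pos h1 h2
  have eexp : ∀ c : ℝ, Real.exp c ^ 2 = Real.exp (2 * c) := by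
    intro c; rw [sq, ← Real.exp_add]; ring_nf
  have harg : ∀ t : ℝ, (σ ^ t * a) ^ 2 + (σ ^ (-t) * b) ^ 2 = u t := by
    intro t
    rw [Real.rpow_def_of_pos hσ, Real.rpow_def_of_pos hσ, mul_pow, mul_pow, eexp, eexp,
      hu_def]
    simp only [hL_def]; ring_nf
  have hfun : (fun t : ℝ => (Real.sqrt ((σ ^ t * a) ^ 2 + (σ ^ (-t) * b) ^ 2)) ^ k)
      = fun t : ℝ => u t ^ (k / 2) := by
    funext t
    rw [harg t, Real.sqrt_eq_rpow, ← Real.rpow_mul (hu t).le,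
      show (1 / 2 : ℝ) * k = k / 2 by ring]
  rw [hfun]
  -- smoothness of u
  have hu_cd : ContDiff ℝ 2 u :=
    (contDiff_const.mul ((contDiff_const.mul contDiff_id).exp)).add
      (contDiff_const.mul (((contDiff_const.mul contDiff_id).neg).exp))
  -- derivative helpers
  have hexp1 : ∀ t : ℝ, HasDerivAt (fun t : ℝ => Real.exp (2 * L * t))
      (2 * L * Real.exp (2 * L * t)) t := by
    intro t
    have h1 : HasDerivAt (fun t : ℝ => 2 * L * t) (2 * L) t := by
      simpa using (hasDerivAt_id t).const_mul (2 * L)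
    simpa [mul_comm] using h1.exp
  have hexp2 : ∀ t : ℝ, HasDerivAt (fun t : ℝ => Real.exp (-(2 * L * t)))
      (-(2 * L) * Real.exp (-(2 * L * t))) t := by
    intro t
    have h1 : HasDerivAt (fun t : ℝ => -(2 * L * t)) (-(2 * L)) t := by
      simpa using (hasDerivAt_id t).const_mul (-(2 * L))
    simpa [mul_comm] using h1.exp
  set v : ℝ → ℝ := fun t =>
      2 * L * (a ^ 2 * Real.exp (2 * L * t) - b ^ 2 * Real.exp (-(2 * L * t))) with hv_def
  have hu' : ∀ t : ℝ, HasDerivAt u (v t) t := by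
    intro t
    have := ((hexp1 t).const_mul (a ^ 2)).add ((hexp2 t).const_mul (b ^ 2))
    exact this.congr_deriv (by simp only [hv_def]; ring)
  have hv' : ∀ t : ℝ, HasDerivAt v (4 * L ^ 2 * u t) t := by
    intro t
    have := (((hexp1 t).const_mul (a ^ 2)).sub ((hexp2 t).const_mul (b ^ 2))).const_mul
      (2 * L)
    exact this.congr_deriv (by simp only [hu_def]; ring)
  -- first derivative of g
  set g1 : ℝ → ℝ := fun t => k / 2 * (u t ^ (k / 2 - 1) * v t) with hg1_def
  have hg' : ∀ t : ℝ, HasDerivAt (fun t => u t ^ (k / 2)) (g1 t) t := by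
    intro t
    have := (hu' t).rpow_const (p := k / 2) (Or.inl (hu t).ne')
    convert this using 1
    simp [hg1_def]; ring
  have hderiv1 : deriv (fun t => u t ^ (k / 2)) = g1 := funext fun t => (hg' t).deriv
  -- second derivative
  have hg'' : ∀ t : ℝ, HasDerivAt g1
      (k / 2 * (((k / 2 - 1) * u t ^ (k / 2 - 1 - 1) * v t) * v t
        + u t ^ (k / 2 - 1) * (4 * L ^ 2 * u t))) t := by
    intro t
    have hp : HasDerivAt (fun t => u t ^ (k / 2 - 1))
        (v t * (k / 2 - 1) * u t ^ (k / 2 - 1 - 1)) t :=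
      (hu' t).rpow_const (Or.inl (hu t).ne')
    have := (hp.mul (hv' t)).const_mul (k / 2)
    exact this.congr_deriv (by ring)
  constructor
  · apply ContDiff.rpow_const_of_ne hu_cd
    intro t
    exact (hu t).ne'
  · intro t
    have h2 : iteratedDeriv 2 (fun t => u t ^ (k / 2)) t
        = k / 2 * (((k / 2 - 1) * u t ^ (k / 2 - 1 - 1) * v t) * v t
          + u t ^ (k / 2 - 1) * (4 * L ^ 2 * u t)) := by
      have e2 : iteratedDeriv 2 (fun t => u t ^ (k / 2))
          = deriv (deriv (fun t => u t ^ (k / 2))) := by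
        rw [show (2 : ℕ) = 1 + 1 from rfl, iteratedDeriv_succ, iteratedDeriv_one]
      rw [e2, hderiv1]
      exact (hg'' t).deriv
    rw [h2]
    -- nonnegativity
    set A := a ^ 2 * Real.exp (2 * L * t) with hA_def
    set B := b ^ 2 * Real.exp (-(2 * L * t)) with hB_def
    have hA : 0 ≤ A := by positivity
    have hB : 0 ≤ B := by positivity
    have hP : 0 < u t ^ (k / 2 - 1 - 1) := Real.rpow_pos_of_pos (hu t) _
    have huAB : u t = A + B := rfl
    have hvAB : v t = 2 * L * (A - B) := rfl
    have hu1 : u t ^ (k / 2 - 1) = u t ^ (k / 2 - 1 - 1) * u t := by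
      rw [← Real.rpow_add_one (hu t).ne']
      ring_nf
    rw [hu1, huAB, hvAB]
    have key : 0 ≤ k / 2 * (A - B) ^ 2 + 4 * (A * B) := by
      have := mul_nonneg hA hB
      nlinarith [sq_nonneg (A - B)]
    have factored :
        k / 2 * ((k / 2 - 1) * u t ^ (k / 2 - 1 - 1) * (2 * L * (A - B)) * (2 * L * (A - B))
          + u t ^ (k / 2 - 1 - 1) * (A + B) * (4 * L ^ 2 * (A + B)))
        = k / 2 * u t ^ (k / 2 - 1 - 1) * (4 * L ^ 2)
          * (k / 2 * (A - B) ^ 2 + 4 * (A * B)) := by ring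
    rw [factored]
    have hk2 : 0 ≤ k / 2 := by linarith
    positivity
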